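/- The Dirichlet series Z(s) := Σ_{c=1}^∞ μ²(c) / (c^s · φ(c)) admits, for Re(s) > 0, the Euler product factorization Z(s) = ζ(s+1) · ∏_p ( 1 + (1/(p−1)) · ( p^{-(s+1)} − p^{-(2s+1)} ) ). -/

import Mathlib

open Real Complex
open scoped Classical

noncomputable def fZ (s : ℂ) : ℕ → ℂ :=
  fun c => (if Squarefree c then (1 : ℂ) else 0) / ((c : ℂ) ^ s * (Nat.totient c : ℂ))

lemma fZ_zero (s : ℂ) : fZ s 0 = 0 := by
  simp [fZ, not_squarefree_zero]

lemma fZ_one (s : ℂ) : fZ s 1 = 1 := by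
  simp [fZ, squarefree_one]

lemma fZ_of_not_squarefree (s : ℂ) {n : ℕ} (h : ¬ Squarefree n) : fZ s n = 0 := by
  simp [fZ, h]

lemma fZ_mul (s : ℂ) {m n : ℕ} (h : Nat.Coprime m n) : fZ s (m * n) = fZ s m * fZ s n := by
  by_cases hsq : Squarefree (m * n)
  · have hm : Squarefree m := hsq.of_mul_left
    have hn : Squarefree n := hsq.of_mul_right
    have hm0 : m ≠ 0 := hm.ne_zero
    have hn0 : n ≠ 0 := hn.ne_zero
    have hcpow : ((m : ℂ) * (n : ℂ)) ^ s = (m : ℂ) ^ s * (n : ℂ) ^ s := by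
      have := mul_cpow_ofReal_nonneg (Nat.cast_nonneg m) (Nat.cast_nonneg n) s
      push_cast at this ⊢
      exact this
    simp only [fZ, if_pos hsq, if_pos hm, if_pos hn, Nat.totient_mul h, Nat.cast_mul, one_div,
      mul_inv]
    rw [hcpow, mul_inv]
    ring
  · rw [Nat.squarefree_mul h, not_and_or] at hsq
    rcases hsq with h' | h' <;>
      simp [fZ_of_not_squarefree s h', fZ_of_not_squarefree s (by assumption),
        fZ_of_not_squarefree s (Nat.squarefree_mul h |>.not.mpr (by tauto))]

noncomputable def GZ (s : ℂ) : ArithmeticFunction ℝ :=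
  ⟨fun n => ‖fZ s n‖, by simp [fZ_zero]⟩

lemma GZ_apply (s : ℂ) (n : ℕ) : GZ s n = ‖fZ s n‖ := rfl

lemma GZ_mult (s : ℂ) : (GZ s).IsMultiplicative :=
  ⟨by simp [GZ_apply, fZ_one], fun {m n} h => by simp [GZ_apply, fZ_mul s h]⟩

lemma norm_fZ_prime_le (s : ℂ) {p : ℕ} (hp : p.Prime) :
    ‖fZ s p‖ ≤ 2 * ((p : ℝ) ^ (1 + s.re))⁻¹ := by
  have hp1 : (1:ℕ) ≤ p := hp.one_lt.le
  have hppos : (0:ℝ) < p := by exact_mod_cast hp.pos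
  have habs : ‖(p:ℂ) ^ s‖ = (p:ℝ) ^ s.re := by
    have := Complex.norm_cpow_eq_rpow_re_of_pos hppos s
    simpa using this
  have hnorm : ‖fZ s p‖ = ((p:ℝ) ^ s.re * ((p:ℝ) - 1))⁻¹ := by
    rw [fZ]
    rw [if_pos hp.squarefree, one_div, norm_inv, norm_mul, habs,
      Complex.norm_natCast, Nat.totient_prime hp]
    push_cast [Nat.cast_sub hp1]
    ring_nf
  have hA : 0 < (p:ℝ) ^ s.re := Real.rpow_pos_of_pos hppos _
  have hple : (p:ℝ) / 2 ≤ (p:ℝ) - 1 := by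
    have : (2:ℝ) ≤ p := by exact_mod_cast hp.two_le
    linarith
  have h2 : (p:ℝ) ^ (1 + s.re) = (p:ℝ) * (p:ℝ) ^ s.re := by
    rw [Real.rpow_add hppos, Real.rpow_one]
  rw [hnorm, h2]
  have key : (p:ℝ) * (p:ℝ) ^ s.re / 2 ≤ (p:ℝ) ^ s.re * ((p:ℝ) - 1) := by
    nlinarith
  calc ((p:ℝ) ^ s.re * ((p:ℝ) - 1))⁻¹ ≤ ((p:ℝ) * (p:ℝ) ^ s.re / 2)⁻¹ :=
        inv_anti₀ (by positivity) key
    _ = 2 * ((p:ℝ) * (p:ℝ) ^ s.re)⁻¹ := by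
        rw [inv_div, div_eq_mul_inv, mul_comm]

lemma summable_norm_fZ (s : ℂ) (hs : 0 < s.re) : Summable fun n => ‖fZ s n‖ := by
  classical
  set σ := s.re with hσ
  have hσ1 : (1:ℝ) < 1 + σ := by linarith
  have hB : Summable (fun n : ℕ => 2 * ((n:ℝ) ^ (1 + σ))⁻¹) := by
    have := Real.summable_one_div_nat_rpow.mpr hσ1
    simpa [one_div] using this.mul_left 2
  set B := ∑' n : ℕ, 2 * ((n:ℝ) ^ (1 + σ))⁻¹ with hBdef
  apply summable_of_sum_range_le (c := Real.exp B) (fun n => norm_nonneg _)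
  intro N
  set A := (Finset.range N).filter Squarefree with hA
  have h1 : ∑ n ∈ Finset.range N, ‖fZ s n‖ = ∑ n ∈ A, ‖fZ s n‖ := by
    rw [hA, Finset.sum_filter_of_ne]
    intro x _ hfx
    by_contra hsq
    exact hfx (by simp [fZ_of_not_squarefree s hsq])
  have hGprod : ∀ n ∈ A, ‖fZ s n‖ = ∏ p ∈ n.primeFactors, ‖fZ s p‖ := by
    intro n hn
    have hnsq : Squarefree n := (Finset.mem_filter.mp hn).2
    have := (GZ_mult s).map_prod_of_prime n.primeFactors
      (fun p hp => Nat.prime_of_mem_primeFactors hp)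
    rw [Nat.prod_primeFactors_of_squarefree hnsq] at this
    simpa [GZ_apply] using this
  have hinj : ∀ x ∈ A, ∀ y ∈ A, x.primeFactors = y.primeFactors → x = y := by
    intro x hx y hy hxy
    have hxs : Squarefree x := (Finset.mem_filter.mp hx).2
    have hys : Squarefree y := (Finset.mem_filter.mp hy).2
    rw [← Nat.prod_primeFactors_of_squarefree hxs, ← Nat.prod_primeFactors_of_squarefree hys, hxy]
  have h2 : ∑ n ∈ A, ‖fZ s n‖ = ∑ T ∈ A.image Nat.primeFactors, ∏ p ∈ T, ‖fZ s p‖ := by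
    rw [Finset.sum_image hinj]
    exact Finset.sum_congr rfl hGprod
  have hsub : A.image Nat.primeFactors ⊆ (N.primesBelow).powerset := by
    intro T hT
    rw [Finset.mem_image] at hT
    obtain ⟨n, hn, rfl⟩ := hT
    rw [Finset.mem_powerset]
    intro p hp
    have hnN : n < N := Finset.mem_range.mp (Finset.mem_filter.mp hn).1
    have hn0 : n ≠ 0 := ((Finset.mem_filter.mp hn).2).ne_zero
    exact Nat.mem_primesBelow.mpr
      ⟨lt_of_le_of_lt (Nat.le_of_dvd (Nat.pos_of_ne_zero hn0) (Nat.dvd_of_mem_primeFactors hp)) hnN,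
        Nat.prime_of_mem_primeFactors hp⟩
  have h3 : ∑ T ∈ A.image Nat.primeFactors, ∏ p ∈ T, ‖fZ s p‖ ≤
      ∑ T ∈ (N.primesBelow).powerset, ∏ p ∈ T, ‖fZ s p‖ :=
    Finset.sum_le_sum_of_subset_of_nonneg hsub
      (fun T _ _ => Finset.prod_nonneg fun p _ => norm_nonneg _)
  have h4 : ∑ T ∈ (N.primesBelow).powerset, ∏ p ∈ T, ‖fZ s p‖ =
      ∏ p ∈ N.primesBelow, (‖fZ s p‖ + 1) := by
    rw [Finset.prod_add]
    simp
  have h5 : ∏ p ∈ N.primesBelow, (‖fZ s p‖ + 1) ≤ Real.exp (∑ p ∈ N.primesBelow, ‖fZ s p‖) := by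
    rw [Real.exp_sum]
    apply Finset.prod_le_prod (fun p _ => by positivity)
    intro p _
    linarith [Real.add_one_le_exp (‖fZ s p‖)]
  have h6 : ∑ p ∈ N.primesBelow, ‖fZ s p‖ ≤ B :=
    calc ∑ p ∈ N.primesBelow, ‖fZ s p‖ ≤ ∑ p ∈ N.primesBelow, 2 * ((p:ℝ) ^ (1 + σ))⁻¹ :=
          Finset.sum_le_sum fun p hp => norm_fZ_prime_le s (Nat.prime_of_mem_primesBelow hp)
      _ ≤ B := hB.sum_le_tsum _ (fun n _ => by positivity)
  calc ∑ n ∈ Finset.range N, ‖fZ s n‖ = ∑ T ∈ A.image Nat.primeFactors, ∏ p ∈ T, ‖fZ s p‖ := by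
        rw [h1, h2]
    _ ≤ ∏ p ∈ N.primesBelow, (‖fZ s p‖ + 1) := by rw [← h4]; exact h3
    _ ≤ Real.exp (∑ p ∈ N.primesBelow, ‖fZ s p‖) := h5
    _ ≤ Real.exp B := Real.exp_le_exp.mpr h6

lemma hasProd_inv_complex {ι : Type*} {f : ι → ℂ} {a : ℂ} (h : HasProd f a) (ha : a ≠ 0) :
    HasProd (fun i => (f i)⁻¹) a⁻¹ := by
  have ht : Filter.Tendsto (fun t : Finset ι => ∏ i ∈ t, f i) Filter.atTop (nhds a) := h
  have := ht.inv₀ ha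
  simpa [HasProd, Finset.prod_inv_distrib] using this

lemma tsum_fZ_prime (s : ℂ) {p : ℕ} (hp : p.Prime) :
    ∑' e : ℕ, fZ s (p ^ e) = 1 + ((p:ℂ) ^ s)⁻¹ * ((p:ℂ) - 1)⁻¹ := by
  have h0 : ∀ e ∉ ({0, 1} : Finset ℕ), fZ s (p ^ e) = 0 := by
    intro e he
    simp only [Finset.mem_insert, Finset.mem_singleton] at he
    push_neg at he
    apply fZ_of_not_squarefree
    intro hsq
    have hdvd : p * p ∣ p ^ e := by
      have : p ^ 2 ∣ p ^ e := pow_dvd_pow p (by omega)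
      simpa [sq] using this
    exact hp.one_lt.ne' (Nat.isUnit_iff.mp (hsq p hdvd))
  rw [tsum_eq_sum h0, Finset.sum_insert (by simp), Finset.sum_singleton, pow_zero, fZ_one,
    pow_one, fZ, if_pos hp.squarefree, Nat.totient_prime hp]
  have hc : ((p - 1 : ℕ) : ℂ) = (p:ℂ) - 1 := by
    push_cast [Nat.cast_sub hp.one_lt.le]
    ring
  rw [hc, one_div, mul_inv]

lemma factor_eq (s : ℂ) {p : ℕ} (hp : p.Prime) :
    (1 + ((p:ℂ) ^ s)⁻¹ * ((p:ℂ) - 1)⁻¹) * (1 - (p:ℂ) ^ (-(s+1))) =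
      1 + (1 / ((p:ℂ) - 1)) * ((p:ℂ) ^ (-(s+1)) - (p:ℂ) ^ (-(2*s+1))) := by
  have hq0 : ((p:ℂ)) ≠ 0 := Nat.cast_ne_zero.mpr hp.pos.ne'
  have hq1 : ((p:ℂ)) - 1 ≠ 0 := by
    rw [sub_ne_zero]
    intro h
    exact hp.one_lt.ne' (Nat.cast_injective (h.trans Nat.cast_one.symm))
  have hY : (p:ℂ) ^ s ≠ 0 := by
    simp [Complex.cpow_eq_zero_iff, hq0]
  have e1 : (p:ℂ) ^ (-(s+1)) = ((p:ℂ)^s)⁻¹ * (p:ℂ)⁻¹ := by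
    rw [show -(s+1) = -s + (-1) by ring, Complex.cpow_add _ _ hq0, Complex.cpow_neg,
      Complex.cpow_neg_one]
  have e2 : (p:ℂ) ^ (-(2*s+1)) = ((p:ℂ)^s)⁻¹ * ((p:ℂ)^s)⁻¹ * (p:ℂ)⁻¹ := by
    rw [show -(2*s+1) = -s + (-s + (-1)) by ring, Complex.cpow_add _ _ hq0,
      Complex.cpow_add _ _ hq0, Complex.cpow_neg, Complex.cpow_neg_one]
    ring
  rw [e1, e2]
  have hb : (p:ℂ) * ((p:ℂ))⁻¹ = 1 := mul_inv_cancel₀ hq0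
  have hc : ((p:ℂ) - 1) * ((p:ℂ) - 1)⁻¹ = 1 := mul_inv_cancel₀ hq1
  rw [one_div]
  linear_combination (-(((p:ℂ)^s)⁻¹ * ((p:ℂ) - 1)⁻¹)) * hb + (((p:ℂ)^s)⁻¹ * ((p:ℂ))⁻¹) * hc

/-- for `Re s > 0`, the Dirichlet series `Z(s) = Σ_c μ²(c)/(c^s φ(c))`
has the Euler product `Z(s) = ζ(s+1) ∏_p (1 + (1/(p-1))(p^{-(s+1)} - p^{-(2s+1)}))`. -/
theorem stmt7 (s : ℂ) (hs : 0 < s.re) :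
    (∑' c : ℕ, (if Squarefree c then (1 : ℂ) else 0) / ((c : ℂ) ^ s * (Nat.totient c : ℂ))) =
      riemannZeta (s + 1) *
        ∏' p : Nat.Primes,
          (1 + (1 / ((p : ℕ) - 1 : ℂ)) *
            (((p : ℕ) : ℂ) ^ (-(s + 1)) - ((p : ℕ) : ℂ) ^ (-(2 * s + 1)))) := by
  have hs1 : 1 < (s + 1).re := by
    simp only [Complex.add_re, Complex.one_re]
    linarith
  have hζ := riemannZeta_eulerProduct_hasProd hs1
  have hζ0 : riemannZeta (s + 1) ≠ 0 := riemannZeta_ne_zero_of_one_lt_re hs1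
  have hprod : HasProd (fun p : Nat.Primes => ∑' e : ℕ, fZ s ((p : ℕ) ^ e)) (∑' n, fZ s n) :=
    EulerProduct.eulerProduct_hasProd (fZ_one s) (fun {m n} h => fZ_mul s h)
      (summable_norm_fZ s hs) (fZ_zero s)
  have hB : HasProd (fun p : Nat.Primes => (1 - ((p : ℕ) : ℂ) ^ (-(s + 1))))
      (riemannZeta (s + 1))⁻¹ := by
    have := hasProd_inv_complex hζ hζ0
    simpa using this
  have hC : HasProd (fun p : Nat.Primes =>
      (1 + (1 / (((p : ℕ) : ℂ) - 1)) *
        (((p : ℕ) : ℂ) ^ (-(s + 1)) - ((p : ℕ) : ℂ) ^ (-(2 * s + 1)))))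
      ((∑' n, fZ s n) * (riemannZeta (s + 1))⁻¹) := by
    have hmul := hprod.mul hB
    rw [show (fun p : Nat.Primes =>
        (1 + (1 / (((p : ℕ) : ℂ) - 1)) *
          (((p : ℕ) : ℂ) ^ (-(s + 1)) - ((p : ℕ) : ℂ) ^ (-(2 * s + 1))))) =
        (fun p : Nat.Primes => (∑' e : ℕ, fZ s ((p : ℕ) ^ e)) *
          (1 - ((p : ℕ) : ℂ) ^ (-(s + 1)))) from
      funext fun p => by rw [tsum_fZ_prime s p.prop]; exact (factor_eq s p.prop).symm]
    exact hmul
  show (∑' n, fZ s n) = _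
  rw [hC.tprod_eq, mul_comm (riemannZeta (s + 1)), mul_assoc, inv_mul_cancel₀ hζ0, mul_one]
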